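/- Let k > 0, c > 1, C ≥ 0, S ≥ 0, and let b, g : ℕ → ℝ be nonnegative sequences satisfying (1 + k)·b(n) ≤ b(n−1) + k·C·(1 + c·k)^{−n}·(1 + g(n)) for all n ≥ 1, and k·∑_{m=1}^{n} g(m) ≤ S for all n ≥ 1. Then b(n) ≤ (b(0) + C/(c−1) + C·S) · (1 + k)^{−n} for all n ≥ 0. -/

import Mathlib

/-- Case `2K_p > 1` (estimate (Newv3)): geometric decay of `b(n)` with rate `(1+k)^{−n}`. -/
theorem stmt_8 (k c C S : ℝ) (hk : 0 < k) (hc : 1 < c) (hC : 0 ≤ C) (hS : 0 ≤ S)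
    (b g : ℕ → ℝ)
    (hbnn : ∀ n : ℕ, 0 ≤ b n) (hgnn : ∀ n : ℕ, 0 ≤ g n)
    (hrec : ∀ n : ℕ, 1 ≤ n →
      (1 + k) * b n ≤ b (n - 1) + k * C * ((1 + c * k) ^ n)⁻¹ * (1 + g n))
    (hsum : ∀ n : ℕ, 1 ≤ n → k * ∑ m ∈ Finset.Icc 1 n, g m ≤ S) :
    ∀ n : ℕ, b n ≤ (b 0 + C / (c - 1) + C * S) * ((1 + k) ^ n)⁻¹ := by
  have h1k : (0:ℝ) < 1 + k := by linarith
  have hck : (0:ℝ) < 1 + c * k := by nlinarith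
  have hkck : 1 + k < 1 + c * k := by nlinarith
  set r : ℝ := (1 + k) / (1 + c * k) with hr
  have hr0 : 0 < r := div_pos h1k hck
  have hr1 : r < 1 := (div_lt_one hck).2 hkck
  have hc1 : (0:ℝ) < c - 1 := by linarith
  have key : ∀ n : ℕ, (1 + k) ^ n * b n ≤
      b 0 + C / (c - 1) * (1 - r ^ n) + C * (k * ∑ m ∈ Finset.Icc 1 n, g m) := by
    intro n
    induction n with
    | zero => simp
    | succ n ih =>
      have hrec' := hrec (n + 1) (by omega)
      simp only [Nat.add_sub_cancel] at hrec'
      have hp : (0:ℝ) ≤ (1 + k) ^ n := by positivity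
      have h2 : (1 + k) ^ (n + 1) * b (n + 1) ≤
          (1 + k) ^ n * b n + (1 + k) ^ n * (k * C * ((1 + c * k) ^ (n + 1))⁻¹ * (1 + g (n + 1))) := by
        calc (1 + k) ^ (n + 1) * b (n + 1) = (1 + k) ^ n * ((1 + k) * b (n + 1)) := by ring
          _ ≤ (1 + k) ^ n * (b n + k * C * ((1 + c * k) ^ (n + 1))⁻¹ * (1 + g (n + 1))) :=
              mul_le_mul_of_nonneg_left hrec' hp
          _ = (1 + k) ^ n * b n + (1 + k) ^ n * (k * C * ((1 + c * k) ^ (n + 1))⁻¹ * (1 + g (n + 1))) := by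
              ring
      have e1 : (1 + k) ^ n * (k * C * ((1 + c * k) ^ (n + 1))⁻¹) = C / (c - 1) * (r ^ n - r ^ (n + 1)) := by
        rw [hr, div_pow, div_pow]
        field_simp
        ring
      have e2 : (1 + k) ^ n * (k * C * ((1 + c * k) ^ (n + 1))⁻¹ * g (n + 1)) ≤ C * (k * g (n + 1)) := by
        have hle : (1 + k) ^ n ≤ (1 + c * k) ^ (n + 1) := by
          calc (1 + k) ^ n ≤ (1 + c * k) ^ n := pow_le_pow_left₀ h1k.le hkck.le n
            _ ≤ (1 + c * k) ^ (n + 1) := by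
                apply pow_le_pow_right₀ (by linarith) (by omega)
        have hpos : (0:ℝ) < (1 + c * k) ^ (n + 1) := by positivity
        have h3 : (1 + k) ^ n * ((1 + c * k) ^ (n + 1))⁻¹ ≤ 1 := by
          rw [← div_eq_mul_inv, div_le_one hpos]; exact hle
        have h4 : 0 ≤ k * C * g (n + 1) := mul_nonneg (mul_nonneg hk.le hC) (hgnn _)
        calc (1 + k) ^ n * (k * C * ((1 + c * k) ^ (n + 1))⁻¹ * g (n + 1))
            = ((1 + k) ^ n * ((1 + c * k) ^ (n + 1))⁻¹) * (k * C * g (n + 1)) := by ring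
          _ ≤ 1 * (k * C * g (n + 1)) := mul_le_mul_of_nonneg_right h3 h4
          _ = C * (k * g (n + 1)) := by ring
      have hsumsplit : ∑ m ∈ Finset.Icc 1 (n + 1), g m = (∑ m ∈ Finset.Icc 1 n, g m) + g (n + 1) :=
        Finset.sum_Icc_succ_top (by omega) g
      calc (1 + k) ^ (n + 1) * b (n + 1)
          ≤ (1 + k) ^ n * b n + (1 + k) ^ n * (k * C * ((1 + c * k) ^ (n + 1))⁻¹ * (1 + g (n + 1))) := h2
        _ = (1 + k) ^ n * b n + (1 + k) ^ n * (k * C * ((1 + c * k) ^ (n + 1))⁻¹)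
              + (1 + k) ^ n * (k * C * ((1 + c * k) ^ (n + 1))⁻¹ * g (n + 1)) := by ring
        _ ≤ (b 0 + C / (c - 1) * (1 - r ^ n) + C * (k * ∑ m ∈ Finset.Icc 1 n, g m))
              + C / (c - 1) * (r ^ n - r ^ (n + 1)) + C * (k * g (n + 1)) := by
            rw [e1]; exact add_le_add (add_le_add_left ih _) e2
        _ = b 0 + C / (c - 1) * (1 - r ^ (n + 1))
              + C * (k * ((∑ m ∈ Finset.Icc 1 n, g m) + g (n + 1))) := by ring
        _ = b 0 + C / (c - 1) * (1 - r ^ (n + 1)) + C * (k * ∑ m ∈ Finset.Icc 1 (n + 1), g m) := by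
            rw [hsumsplit]
  intro n
  have hkey := key n
  have hbound : b 0 + C / (c - 1) * (1 - r ^ n) + C * (k * ∑ m ∈ Finset.Icc 1 n, g m)
      ≤ b 0 + C / (c - 1) + C * S := by
    have h5 : C / (c - 1) * (1 - r ^ n) ≤ C / (c - 1) := by
      have : r ^ n ≥ 0 := by positivity
      have hCc : 0 ≤ C / (c - 1) := div_nonneg hC hc1.le
      nlinarith
    have h6 : C * (k * ∑ m ∈ Finset.Icc 1 n, g m) ≤ C * S := by
      apply mul_le_mul_of_nonneg_left _ hC
      rcases Nat.eq_zero_or_pos n with h | h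
      · subst h; simp [hS]
      · exact hsum n h
    linarith
  have hpn : (0:ℝ) < (1 + k) ^ n := by positivity
  have : b n = ((1 + k) ^ n * b n) * ((1 + k) ^ n)⁻¹ := by
    field_simp
  rw [this]
  apply mul_le_mul_of_nonneg_right (le_trans hkey hbound) (by positivity)
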